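/- Let (G,σ) and (H,σ') be finite simple graphs with ordered vertex sets, let p = FF(G,σ) and q = FF(H,σ') with 2 ≤ p ≤ q. Then there exists a proper coloring C of G□H with q colors such that (G□H, lex, C) has a q-greedy defining set of cardinality at most α(G)·α(H)·[pq − q + p − 1 − (p·log₂(4p−4))/4], where α denotes the independence number. -/

import Mathlib

open SimpleGraph

/-- First-Fit (greedy) coloring of `G` with respect to the vertex ordering given by the
injective position function `ord` (vertex `u` comes before `v` iff `ord u < ord v`).
Each vertex receives the smallest positive integer not used on earlier neighbors. -/
noncomputable def firstFit {V : Type*} (G : SimpleGraph V) (ord : V → ℕ) : V → ℕ :=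
  (InvImage.wf ord Nat.lt_wfRel.wf).fix
    (fun v ih => sInf {c : ℕ | 1 ≤ c ∧ ∀ u, ∀ h : ord u < ord v, G.Adj u v → ih u h ≠ c})

/-- `FFColors G ord` is the number of colors used by the First-Fit coloring. -/
noncomputable def FFColors {V : Type*} [Fintype V] (G : SimpleGraph V) (ord : V → ℕ) : ℕ :=
  (Finset.univ.image (firstFit G ord)).card

open Classical in
/-- First-Fit coloring of `(G, ord)` subject to the pre-coloring `C₀` on the set `S`:
vertices of `S` keep their pre-assigned colors and are skipped by the scan; every other
vertex receives the smallest positive integer not already assigned (or pre-assigned)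
to a neighbor. -/
noncomputable def firstFitWith {V : Type*} (G : SimpleGraph V) (ord : V → ℕ)
    (S : Set V) (C₀ : V → ℕ) : V → ℕ :=
  (InvImage.wf ord Nat.lt_wfRel.wf).fix
    (fun v ih =>
      if v ∈ S then C₀ v
      else sInf {c : ℕ | 1 ≤ c ∧ (∀ u, G.Adj u v → u ∈ S → C₀ u ≠ c) ∧
        ∀ u, ∀ h : ord u < ord v, G.Adj u v → u ∉ S → ih u h ≠ c})

/-- Position function of the lexicographic order on `V × W` induced by the position
functions `σ` on `V` and `σ'` on `W` (for injective `σ, σ'`: `(u,v)` comes before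
`(u',v')` iff `σ u < σ u'`, or `u = u'` and `σ' v < σ' v'`). -/
noncomputable def lexPos {V W : Type*} [Fintype W] (σ : V → ℕ) (σ' : W → ℕ) : V × W → ℕ :=
  fun p => σ p.1 * (Finset.univ.sup σ' + 1) + σ' p.2

/-- A proper coloring with colors in the positive integers. -/
def IsProperColoring {V : Type*} (G : SimpleGraph V) (C : V → ℕ) : Prop :=
  (∀ v, 1 ≤ C v) ∧ ∀ ⦃u v⦄, G.Adj u v → C u ≠ C v

/-- `D` is a `(C, ord)`-descent: `D = {v} ∪ N` where `C v = y`, `x < y` is a (positive)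
color, `N` is the set of neighbors of `v` of color `x`, and every `u ∈ N` comes after
`v` in the order. -/
def IsDescent {V : Type*} (G : SimpleGraph V) (ord : V → ℕ) (C : V → ℕ) (D : Set V) : Prop :=
  ∃ v x, 1 ≤ x ∧ x < C v ∧
    (∀ u, G.Adj u v → C u = x → ord v < ord u) ∧
    D = insert v {u | G.Adj u v ∧ C u = x}

/-- The Grundy number: the maximum of `FFColors G ord` over all vertex orderings. -/
noncomputable def grundy {V : Type*} [Fintype V] (G : SimpleGraph V) : ℕ :=
  sSup {n | ∃ ord : V → ℕ, Function.Injective ord ∧ FFColors G ord = n}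

/-- The independence number of `G`. -/
noncomputable def indepNum {V : Type*} [Fintype V] (G : SimpleGraph V) : ℕ :=
  sSup {n | ∃ s : Finset V, (∀ u ∈ s, ∀ v ∈ s, ¬ G.Adj u v) ∧ s.card = n}

/-- An `m × n` Latin rectangle: entries in `{1, …, n}`, no repeats in rows or columns. -/
def IsLatinRectangle {m n : ℕ} (R : Fin m → Fin n → ℕ) : Prop :=
  (∀ i j, R i j ∈ Finset.Icc 1 n) ∧ (∀ i, Function.Injective (R i)) ∧
    (∀ j, Function.Injective (fun i => R i j))

/-- `S` is a greedy defining set of the rectangle `R` (cells scanned in lexicographic,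
i.e. row-by-row, order): the greedy completion, which skips the cells of `S` (fixed to
their values in `R`) and places in each other cell the smallest positive integer not yet
appearing in its row or column, reproduces `R`.  This is First-Fit on the rook's graph
`K_m □ K_n` subject to the pre-coloring of `S` by `R`. -/
noncomputable def IsRectGDS {m n : ℕ} (R : Fin m → Fin n → ℕ) (S : Set (Fin m × Fin n)) : Prop :=
  firstFitWith ((⊤ : SimpleGraph (Fin m)).boxProd (⊤ : SimpleGraph (Fin n)))
    (lexPos Fin.val Fin.val) S (fun p => R p.1 p.2) = fun p => R p.1 p.2

/-- The Latin square `L_k` of order `2^k`: the entry in row `i`, column `j` is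
`2^k - (i XOR j)`; equivalently the `k`-fold tensor product of `[[2,1],[1,2]]`. -/
def Lsquare (k : ℕ) : Fin (2 ^ k) → Fin (2 ^ k) → ℕ :=
  fun i j => 2 ^ k - (i.val ^^^ j.val)
section FFhelpers
variable {V : Type*} (G : SimpleGraph V) (ord : V → ℕ)

lemma firstFit_spec (v : V) :
    firstFit G ord v = sInf {c : ℕ | 1 ≤ c ∧
      ∀ u, ord u < ord v → G.Adj u v → firstFit G ord u ≠ c} :=
  WellFounded.fix_eq _ _ _

open Classical in
lemma firstFitWith_spec (S : Set V) (C₀ : V → ℕ) (v : V) :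
    firstFitWith G ord S C₀ v =
      if v ∈ S then C₀ v
      else sInf {c : ℕ | 1 ≤ c ∧ (∀ u, G.Adj u v → u ∈ S → C₀ u ≠ c) ∧
        ∀ u, ord u < ord v → G.Adj u v → u ∉ S → firstFitWith G ord S C₀ u ≠ c} :=
  WellFounded.fix_eq _ _ _

variable [Fintype V]

lemma firstFit_mem (v : V) :
    firstFit G ord v ∈ {c : ℕ | 1 ≤ c ∧
      ∀ u, ord u < ord v → G.Adj u v → firstFit G ord u ≠ c} := by
  rw [firstFit_spec]
  apply Nat.sInf_mem
  refine ⟨Finset.univ.sup (firstFit G ord) + 1, Nat.le_add_left _ _, fun u _ _ => ?_⟩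
  have h := Finset.le_sup (f := firstFit G ord) (Finset.mem_univ u)
  omega

lemma firstFit_one_le (v : V) : 1 ≤ firstFit G ord v := (firstFit_mem G ord v).1

lemma firstFit_witness (v : V) (c : ℕ) (h1 : 1 ≤ c) (h2 : c < firstFit G ord v) :
    ∃ u, G.Adj u v ∧ ord u < ord v ∧ firstFit G ord u = c := by
  by_contra hc
  push_neg at hc
  have hmem : c ∈ {c : ℕ | 1 ≤ c ∧
      ∀ u, ord u < ord v → G.Adj u v → firstFit G ord u ≠ c} :=
    ⟨h1, fun u hu hadj => hc u hadj hu⟩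
  have h := Nat.sInf_le hmem
  rw [← firstFit_spec] at h
  omega

lemma firstFit_proper (hord : Function.Injective ord) {u v : V} (h : G.Adj u v) :
    firstFit G ord u ≠ firstFit G ord v := by
  have hne : ord u ≠ ord v := fun he => h.ne (hord he)
  rcases lt_or_gt_of_ne hne with hlt | hlt
  · exact fun hEq => (firstFit_mem G ord v).2 u hlt h hEq
  · exact fun hEq => (firstFit_mem G ord u).2 v hlt h.symm hEq.symm

lemma firstFit_le (p : ℕ) (hp : FFColors G ord = p) (v : V) : firstFit G ord v ≤ p := by
  classical
  set I := Finset.univ.image (firstFit G ord) with hI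
  have hvI : firstFit G ord v ∈ I := Finset.mem_image_of_mem _ (Finset.mem_univ v)
  have hne : I.Nonempty := ⟨_, hvI⟩
  set M := I.max' hne with hM
  have hIM : I = Finset.Icc 1 M := by
    ext c
    simp only [Finset.mem_Icc]
    constructor
    · intro hc
      refine ⟨?_, I.le_max' c hc⟩
      obtain ⟨u, _, rfl⟩ := Finset.mem_image.mp hc
      exact firstFit_one_le G ord u
    · rintro ⟨h1, hMle⟩
      obtain ⟨v₀, _, hv₀⟩ := Finset.mem_image.mp (I.max'_mem hne)
      rcases eq_or_lt_of_le hMle with rfl | hlt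
      · rw [hM, ← hv₀]; exact Finset.mem_image_of_mem _ (Finset.mem_univ v₀)
      · obtain ⟨u, _, _, hu⟩ := firstFit_witness G ord v₀ c h1 (by omega)
        rw [← hu]; exact Finset.mem_image_of_mem _ (Finset.mem_univ u)
  have hpM : p = M := by
    rw [FFColors, ← hI, hIM, Nat.card_Icc] at hp
    omega
  exact hpM ▸ I.le_max' _ hvI

lemma card_le_indepNum {s : Finset V} (h : ∀ u ∈ s, ∀ v ∈ s, ¬ G.Adj u v) :
    s.card ≤ _root_.indepNum G := by
  apply le_csSup
  · refine ⟨Fintype.card V, fun n hn => ?_⟩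
    obtain ⟨t, _, rfl⟩ := hn
    exact t.card_le_univ
  · exact ⟨s, h, rfl⟩

end FFhelpers

section Main
set_option maxHeartbeats 1000000

lemma aux_construction {V W : Type*} [Fintype V] [Fintype W]
    (G : SimpleGraph V) (H : SimpleGraph W)
    (σ : V → ℕ) (σ' : W → ℕ) (p q : ℕ) (h2p : 2 ≤ p) (hpq : p ≤ q)
    (a : V → ℕ) (b : W → ℕ)
    (ha1 : ∀ u, 1 ≤ a u) (hap : ∀ u, a u ≤ p)
    (hb1 : ∀ w, 1 ≤ b w) (hbq : ∀ w, b w ≤ q)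
    (haproper : ∀ {u v : V}, G.Adj u v → a u ≠ a v)
    (hbproper : ∀ {u v : W}, H.Adj u v → b u ≠ b v)
    (hbwit : ∀ w c, 1 ≤ c → c < b w → ∃ w', H.Adj w' w ∧ σ' w' < σ' w ∧ b w' = c) :
    ∃ C : V × W → ℕ, IsProperColoring (G.boxProd H) C ∧ (∀ v, C v ≤ q) ∧
      ∃ S : Finset (V × W),
        firstFitWith (G.boxProd H) (lexPos σ σ') ↑S C = C ∧
        (S.card : ℕ) ≤ ((Finset.Icc 2 p ×ˢ Finset.Icc 1 q).filter
            (fun c => c.1 + c.2 ≤ q + 1)).card * (_root_.indepNum G * _root_.indepNum H) := by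
  classical
  have hq2 : 2 ≤ q := h2p.trans hpq
  set R : ℕ → ℕ → ℕ := fun i j => (i + j - 2) % q + 1 with hR
  set C : V × W → ℕ := fun x => R (a x.1) (b x.2) with hC
  -- basic facts about R
  have hR1 : ∀ i j, 1 ≤ R i j := fun i j => Nat.le_add_left 1 _
  have hRq : ∀ i j, R i j ≤ q := fun i j => Nat.succ_le_of_lt (Nat.mod_lt _ (by omega))
  have hmodne : ∀ m n : ℕ, m < n → n - m < q → m % q ≠ n % q := by
    intro m n hmn hlt heq
    have hdvd : q ∣ n - m := (Nat.modEq_iff_dvd' hmn.le).mp heq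
    have := Nat.le_of_dvd (by omega) hdvd
    omega
  have hrow : ∀ i j j', 1 ≤ i → 1 ≤ j → j ≤ q → 1 ≤ j' → j' ≤ q → j ≠ j' → R i j ≠ R i j' := by
    intro i j j' hi hj hjq hj' hj'q hne heq
    simp only [hR] at heq
    have heq' : (i + j - 2) % q = (i + j' - 2) % q := by omega
    rcases hne.lt_or_gt with h | h
    · exact hmodne _ _ (by omega) (by omega) heq'
    · exact hmodne _ _ (by omega) (by omega) heq'.symm
  have hcol : ∀ i i' j, 1 ≤ i → i ≤ q → 1 ≤ i' → i' ≤ q → 1 ≤ j → i ≠ i' → R i j ≠ R i' j := by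
    intro i i' j hi hiq hi' hi'q hj hne heq
    simp only [hR] at heq
    have heq' : (i + j - 2) % q = (i' + j - 2) % q := by omega
    rcases hne.lt_or_gt with h | h
    · exact hmodne _ _ (by omega) (by omega) heq'
    · exact hmodne _ _ (by omega) (by omega) heq'.symm
  have hCproper : IsProperColoring (G.boxProd H) C := by
    constructor
    · intro v; exact hR1 _ _
    · rintro ⟨x1, x2⟩ ⟨y1, y2⟩ hadj
      rcases SimpleGraph.boxProd_adj.mp hadj with ⟨hG, he⟩ | ⟨hH, he⟩
      · simp only at he
        subst he
        exact hcol (a x1) (a y1) (b x2) (ha1 _) ((hap _).trans hpq) (ha1 _)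
          ((hap _).trans hpq) (hb1 _) (haproper hG)
      · simp only at he
        subst he
        exact hrow (a x1) (b x2) (b y2) (ha1 _) (hb1 _) (hbq _) (hb1 _) (hbq _)
          (hbproper hH)
  -- the defining set
  set S : Finset (V × W) :=
    Finset.univ.filter (fun x => 2 ≤ a x.1 ∧ a x.1 + b x.2 ≤ q + 1) with hS
  have hlexr : ∀ (u : V) {w w' : W}, σ' w' < σ' w →
      lexPos σ σ' (u, w') < lexPos σ σ' (u, w) := by
    intro u w w' h
    simp only [lexPos]
    omega
  have hmain : firstFitWith (G.boxProd H) (lexPos σ σ') ↑S C = C := by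
    funext x₀
    suffices h : ∀ n (x : V × W), lexPos σ σ' x < n →
        firstFitWith (G.boxProd H) (lexPos σ σ') ↑S C x = C x by
      exact h (lexPos σ σ' x₀ + 1) x₀ (Nat.lt_succ_self _)
    intro n
    induction n with
    | zero => exact fun x hx => absurd hx (by omega)
    | succ n ih =>
      rintro ⟨x1, x2⟩ hx
      have IH : ∀ u : V × W, lexPos σ σ' u < lexPos σ σ' (x1, x2) →
          firstFitWith (G.boxProd H) (lexPos σ σ') ↑S C u = C u :=
        fun u hu => ih u (by omega)
      rw [firstFitWith_spec]
      by_cases hxS : (x1, x2) ∈ (↑S : Set (V × W))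
      · rw [if_pos hxS]
      · rw [if_neg hxS]
        have hmem : C (x1, x2) ∈ {c : ℕ | 1 ≤ c ∧
            (∀ u, (G.boxProd H).Adj u (x1, x2) → u ∈ (↑S : Set (V × W)) → C u ≠ c) ∧
            ∀ u, lexPos σ σ' u < lexPos σ σ' (x1, x2) → (G.boxProd H).Adj u (x1, x2) →
              u ∉ (↑S : Set (V × W)) →
              firstFitWith (G.boxProd H) (lexPos σ σ') ↑S C u ≠ c} := by
          refine ⟨hR1 _ _, fun u hadj _ => hCproper.2 hadj, fun u hu hadj _ => ?_⟩
          rw [IH u hu]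
          exact hCproper.2 hadj
        have hcases : a x1 = 1 ∨ (2 ≤ a x1 ∧ q + 2 ≤ a x1 + b x2) := by
          have h1 := ha1 x1
          simp only [hS, Finset.coe_filter, Set.mem_setOf_eq, Finset.mem_univ,
            true_and] at hxS
          omega
        have hwit : ∀ c, 1 ≤ c → c < C (x1, x2) → ∃ u, (G.boxProd H).Adj u (x1, x2) ∧
            lexPos σ σ' u < lexPos σ σ' (x1, x2) ∧ C u = c := by
          intro c hc1 hcx
          rcases hcases with h1 | ⟨h2, hsum⟩
          · -- first row : C x = b x2
            have hCx : C (x1, x2) = b x2 := by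
              simp only [hC, hR]
              have hb := hbq x2
              have hb' := hb1 x2
              have h' : a x1 + b x2 - 2 = b x2 - 1 := by omega
              rw [h', Nat.mod_eq_of_lt (by omega)]
              omega
            rw [hCx] at hcx
            obtain ⟨w', hadjH, hlt, hbw⟩ := hbwit x2 c hc1 hcx
            refine ⟨(x1, w'), SimpleGraph.boxProd_adj.mpr (Or.inr ⟨hadjH, rfl⟩),
              hlexr x1 hlt, ?_⟩
            simp only [hC, hR, h1, hbw]
            have hcq : c ≤ q := by have := hbq x2; omega
            have h' : 1 + c - 2 = c - 1 := by omega
            rw [h', Nat.mod_eq_of_lt (by omega)]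
            omega
          · -- wrapped part of row i
            have haq : a x1 ≤ q := (hap x1).trans hpq
            have hCx : C (x1, x2) = a x1 + b x2 - q - 1 := by
              simp only [hC, hR]
              have hb := hbq x2
              rw [Nat.mod_eq_sub_mod (by omega), Nat.mod_eq_of_lt (by omega)]
              omega
            rw [hCx] at hcx
            have hbx := hbq x2
            obtain ⟨w', hadjH, hlt, hbw⟩ :=
              hbwit x2 (q + 1 - a x1 + c) (by omega) (by omega)
            refine ⟨(x1, w'), SimpleGraph.boxProd_adj.mpr (Or.inr ⟨hadjH, rfl⟩),
              hlexr x1 hlt, ?_⟩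
            simp only [hC, hR, hbw]
            have harg : a x1 + (q + 1 - a x1 + c) - 2 = q + c - 1 := by omega
            rw [harg, Nat.mod_eq_sub_mod (by omega), Nat.mod_eq_of_lt (by omega)]
            omega
        refine le_antisymm (Nat.sInf_le hmem) ?_
        by_contra hlt'
        push_neg at hlt'
        have hsmem := Nat.sInf_mem (⟨_, hmem⟩ : Set.Nonempty _)
        obtain ⟨u, hadj, hu, hCu⟩ := hwit _ hsmem.1 hlt'
        by_cases huS : u ∈ (↑S : Set (V × W))
        · exact hsmem.2.1 u hadj huS hCu
        · exact hsmem.2.2 u hu hadj huS (by rw [IH u hu]; exact hCu)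
  -- cardinality bound
  refine ⟨C, hCproper, fun v => hRq _ _, S, hmain, ?_⟩
  set t : Finset (ℕ × ℕ) :=
    (Finset.Icc 2 p ×ˢ Finset.Icc 1 q).filter (fun c => c.1 + c.2 ≤ q + 1) with ht
  have hmapS : ∀ x ∈ S, (a x.1, b x.2) ∈ t := by
    intro x hx
    simp only [hS, Finset.mem_filter, Finset.mem_univ, true_and] at hx
    simp only [ht, Finset.mem_filter, Finset.mem_product, Finset.mem_Icc]
    exact ⟨⟨⟨hx.1, hap _⟩, ⟨hb1 _, hbq _⟩⟩, hx.2⟩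
  rw [Finset.card_eq_sum_card_fiberwise hmapS]
  have hfiber : ∀ cp ∈ t,
      (S.filter (fun x => (a x.1, b x.2) = cp)).card ≤ _root_.indepNum G * _root_.indepNum H := by
    intro cp _
    have hsub : S.filter (fun x => (a x.1, b x.2) = cp) ⊆
        (Finset.univ.filter fun u => a u = cp.1) ×ˢ
          (Finset.univ.filter fun w => b w = cp.2) := by
      intro x hx
      simp only [Finset.mem_filter, Finset.mem_univ, true_and] at hx
      simp only [Finset.mem_product, Finset.mem_filter, Finset.mem_univ, true_and]
      exact ⟨congrArg Prod.fst hx.2, congrArg Prod.snd hx.2⟩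
    calc (S.filter (fun x => (a x.1, b x.2) = cp)).card
        ≤ ((Finset.univ.filter fun u => a u = cp.1) ×ˢ
            (Finset.univ.filter fun w => b w = cp.2)).card := Finset.card_le_card hsub
      _ = (Finset.univ.filter fun u => a u = cp.1).card *
            (Finset.univ.filter fun w => b w = cp.2).card := Finset.card_product _ _
      _ ≤ _root_.indepNum G * _root_.indepNum H := by
          apply Nat.mul_le_mul
          · apply card_le_indepNum G
            intro u hu v hv hadj
            simp only [Finset.mem_filter] at hu hv
            exact haproper hadj (hu.2.trans hv.2.symm)
          · apply card_le_indepNum H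
            intro u hu v hv hadj
            simp only [Finset.mem_filter] at hu hv
            exact hbproper hadj (hu.2.trans hv.2.symm)
  calc ∑ cp ∈ t, (S.filter (fun x => (a x.1, b x.2) = cp)).card
      ≤ ∑ _cp ∈ t, _root_.indepNum G * _root_.indepNum H := Finset.sum_le_sum hfiber
    _ = t.card * (_root_.indepNum G * _root_.indepNum H) := by
        rw [Finset.sum_const, smul_eq_mul]

end Main

section Count

lemma tcard_eq (p q : ℕ) (hpq : p ≤ q) :
    ((Finset.Icc 2 p ×ˢ Finset.Icc 1 q).filter (fun c => c.1 + c.2 ≤ q + 1)).card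
      = ∑ i ∈ Finset.Icc 2 p, (q + 1 - i) := by
  classical
  rw [Finset.card_filter, Finset.sum_product]
  refine Finset.sum_congr rfl fun i hi => ?_
  have hi' := Finset.mem_Icc.mp hi
  have hstep : (∑ j ∈ Finset.Icc 1 q, if (i, j).1 + (i, j).2 ≤ q + 1 then 1 else 0)
      = ((Finset.Icc 1 q).filter (fun j => i + j ≤ q + 1)).card := by
    rw [Finset.card_filter]
  rw [hstep]
  have hset : (Finset.Icc 1 q).filter (fun j => i + j ≤ q + 1)
      = Finset.Icc 1 (q + 1 - i) := by
    ext j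
    simp only [Finset.mem_filter, Finset.mem_Icc]
    omega
  rw [hset, Nat.card_Icc]
  omega

lemma sum_cast_eq (q : ℕ) : ∀ m, 1 ≤ m → m ≤ q →
    (∑ i ∈ Finset.Icc 2 m, ((q + 1 - i : ℕ) : ℝ))
      = ((m : ℝ) - 1) * ((q : ℝ) + 1) - ((m : ℝ) * (m + 1) / 2 - 1) := by
  intro m hm
  induction m, hm using Nat.le_induction with
  | base =>
    intro _
    rw [show Finset.Icc 2 1 = ∅ from Finset.Icc_eq_empty (by omega)]
    simp
  | succ n hn ih =>
    intro hq
    rw [Finset.sum_Icc_succ_top (by omega : 2 ≤ n + 1), ih (by omega)]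
    have hc : ((q + 1 - (n + 1) : ℕ) : ℝ) = (q : ℝ) - n := by
      have h1 : q + 1 - (n + 1) = q - n := by omega
      rw [h1, Nat.cast_sub (by omega)]
    rw [hc]
    push_cast
    ring

lemma log_bound (p : ℕ) (h2p : 2 ≤ p) :
    Real.logb 2 (4 * (p : ℝ) - 4) ≤ (p : ℝ) + 1 := by
  have hp2 : (2 : ℝ) ≤ (p : ℝ) := by exact_mod_cast h2p
  have hx : (0 : ℝ) < 4 * (p : ℝ) - 4 := by linarith
  rw [Real.logb_le_iff_le_rpow one_lt_two hx]
  have hpow : ((2 : ℝ) ^ ((p : ℝ) + 1)) = ((2 ^ (p + 1) : ℕ) : ℝ) := by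
    rw [show ((p : ℝ) + 1) = ((p + 1 : ℕ) : ℝ) by push_cast; ring,
      Real.rpow_natCast]
    push_cast
    ring
  rw [hpow]
  have hnat : 4 * p ≤ 2 ^ (p + 1) := by
    have key : ∀ m, 2 ≤ m → 2 * m ≤ 2 ^ m := by
      intro m hm
      induction m, hm using Nat.le_induction with
      | base => norm_num
      | succ n hn ih =>
        have h2n : 2 ≤ 2 ^ n := by
          calc 2 = 2 ^ 1 := by norm_num
            _ ≤ 2 ^ n := Nat.pow_le_pow_right (by norm_num) (by omega : 1 ≤ n)
        calc 2 * (n + 1) = 2 * n + 2 := by ring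
          _ ≤ 2 ^ n + 2 ^ n := by omega
          _ = 2 ^ (n + 1) := by ring
    have := key p h2p
    calc 4 * p = 2 * (2 * p) := by ring
      _ ≤ 2 * 2 ^ p := by omega
      _ = 2 ^ (p + 1) := by ring
  have : ((4 * p : ℕ) : ℝ) ≤ ((2 ^ (p + 1) : ℕ) : ℝ) := by exact_mod_cast hnat
  push_cast at this ⊢
  linarith

end Count

/-- With `p = FF(G,σ)`, `q = FF(H,σ')`, `2 ≤ p ≤ q`, there is a proper
coloring `C` of `G □ H` with `q` colors admitting a `q`-greedy defining set of
cardinality at most `α(G)·α(H)·[pq - q + p - 1 - p·log₂(4p-4)/4]`. -/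
theorem boxProd_gds_upper_bound {V W : Type*} [Fintype V] [Fintype W]
    (G : SimpleGraph V) (H : SimpleGraph W)
    (σ : V → ℕ) (σ' : W → ℕ) (hσ : Function.Injective σ) (hσ' : Function.Injective σ')
    (p q : ℕ) (hp : FFColors G σ = p) (hq : FFColors H σ' = q)
    (h2p : 2 ≤ p) (hpq : p ≤ q) :
    ∃ C : V × W → ℕ, IsProperColoring (G.boxProd H) C ∧ (∀ v, C v ≤ q) ∧
      ∃ S : Finset (V × W),
        firstFitWith (G.boxProd H) (lexPos σ σ') ↑S C = C ∧
        (S.card : ℝ) ≤ (_root_.indepNum G : ℝ) * (_root_.indepNum H) *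
          ((p : ℝ) * q - q + p - 1 - (p : ℝ) * Real.logb 2 (4 * (p : ℝ) - 4) / 4) := by
  classical
  obtain ⟨C, hCp, hCq, S, hfix, hcard⟩ :=
    aux_construction G H σ σ' p q h2p hpq (firstFit G σ) (firstFit H σ')
      (firstFit_one_le G σ) (firstFit_le G σ p hp)
      (firstFit_one_le H σ') (firstFit_le H σ' q hq)
      (fun h => firstFit_proper G σ hσ h)
      (fun h => firstFit_proper H σ' hσ' h)
      (fun w c h1 h2 => firstFit_witness H σ' w c h1 h2)
  refine ⟨C, hCp, hCq, S, hfix, ?_⟩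
  have htR : ((((Finset.Icc 2 p ×ˢ Finset.Icc 1 q).filter
      (fun c => c.1 + c.2 ≤ q + 1)).card : ℕ) : ℝ)
      = ((p : ℝ) - 1) * ((q : ℝ) + 1) - ((p : ℝ) * (p + 1) / 2 - 1) := by
    rw [tcard_eq p q hpq, Nat.cast_sum]
    exact sum_cast_eq q p (by omega) hpq
  have hSR : (S.card : ℝ) ≤ (((p : ℝ) - 1) * ((q : ℝ) + 1)
      - ((p : ℝ) * (p + 1) / 2 - 1)) * ((_root_.indepNum G : ℝ) * (_root_.indepNum H : ℝ)) := by
    rw [← htR]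
    have : (S.card : ℝ) ≤ ((((Finset.Icc 2 p ×ˢ Finset.Icc 1 q).filter
        (fun c => c.1 + c.2 ≤ q + 1)).card : ℝ)) * ((_root_.indepNum G : ℝ) * (_root_.indepNum H : ℝ)) := by
      exact_mod_cast hcard
    exact this
  have hL := log_bound p h2p
  have hp2 : (2 : ℝ) ≤ (p : ℝ) := by exact_mod_cast h2p
  have hpq' : (p : ℝ) ≤ (q : ℝ) := by exact_mod_cast hpq
  have hB : ((p : ℝ) - 1) * ((q : ℝ) + 1) - ((p : ℝ) * (p + 1) / 2 - 1)
      ≤ (p : ℝ) * q - q + p - 1 - (p : ℝ) * Real.logb 2 (4 * (p : ℝ) - 4) / 4 := by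
    have hpL : (p : ℝ) * Real.logb 2 (4 * (p : ℝ) - 4) ≤ (p : ℝ) * ((p : ℝ) + 1) :=
      mul_le_mul_of_nonneg_left hL (by linarith)
    nlinarith [hpL, hp2, hpq']
  have h0 : (0 : ℝ) ≤ (_root_.indepNum G : ℝ) * (_root_.indepNum H : ℝ) := by positivity
  calc (S.card : ℝ)
      ≤ (((p : ℝ) - 1) * ((q : ℝ) + 1) - ((p : ℝ) * (p + 1) / 2 - 1))
        * ((_root_.indepNum G : ℝ) * (_root_.indepNum H : ℝ)) := hSR
    _ ≤ ((p : ℝ) * q - q + p - 1 - (p : ℝ) * Real.logb 2 (4 * (p : ℝ) - 4) / 4)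
        * ((_root_.indepNum G : ℝ) * (_root_.indepNum H : ℝ)) := mul_le_mul_of_nonneg_right hB h0
    _ = (_root_.indepNum G : ℝ) * (_root_.indepNum H : ℝ)
        * ((p : ℝ) * q - q + p - 1 - (p : ℝ) * Real.logb 2 (4 * (p : ℝ) - 4) / 4) := by
        ring
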